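/- Let N ∈ ℕ with N ≥ 1, let L ∈ Matrix (Fin N) (Fin N) ℂ satisfy L·𝟙 = 0, suppose 0 is a root of the characteristic polynomial of L with algebraic multiplicity exactly 1, and let K > 0 be a real number such that every nonzero eigenvalue λ of L satisfies |λ|² < 2·K·Re(λ). Let ℓ₁ be the first row of L, 𝟙ℓ₁ the rank-one matrix with every row equal to ℓ₁, and A := I + (1/K)·(𝟙ℓ₁ − L). Then 1 is a root of the characteristic polynomial of A with algebraic multiplicity exactly 1, and every eigenvalue μ of A with μ ≠ 1 satisfies |μ| < 1. -/

import Mathlib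

open Matrix

open Polynomial



lemma eval_charpoly_det {N : ℕ} (M : Matrix (Fin N) (Fin N) ℂ) (x : ℂ) :
    M.charpoly.eval x = (Matrix.scalar (Fin N) x - M).det := by
  rw [Matrix.charpoly, _root_.eval_det, matPolyEquiv_charmatrix]
  simp

lemma mem_spectrum_iff_charpoly {N : ℕ} (M : Matrix (Fin N) (Fin N) ℂ) (x : ℂ) :
    x ∈ spectrum ℂ M ↔ M.charpoly.eval x = 0 := by
  rw [spectrum.mem_iff, eval_charpoly_det]
  have h : (algebraMap ℂ (Matrix (Fin N) (Fin N) ℂ)) x = Matrix.scalar (Fin N) x := rfl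
  rw [h]
  simp [Matrix.isUnit_iff_isUnit_det, isUnit_iff_ne_zero]



lemma det_sub_rankone {N : ℕ} (hN : 1 ≤ N) (L : Matrix (Fin N) (Fin N) ℂ)
    (hL : L *ᵥ (fun _ => (1 : ℂ)) = 0) (s : ℂ)
    (hB : (L - s • 1).det ≠ 0) :
    (L - s • 1 - Matrix.of (fun _ j => L ⟨0, hN⟩ j)).det = (L - s • 1).det := by
  set B : Matrix (Fin N) (Fin N) ℂ := L - s • 1 with hBdef
  set ℓ : Fin N → ℂ := fun j => L ⟨0, hN⟩ j with hldef
  have hone : (fun _ => (1 : ℂ)) ≠ (0 : Fin N → ℂ) := by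
    intro h
    have := congrFun h ⟨0, hN⟩
    simp at this
  have hs : s ≠ 0 := by
    rintro rfl
    apply hB
    rw [← Matrix.exists_mulVec_eq_zero_iff]
    exact ⟨fun _ => 1, hone, by simpa [hBdef] using hL⟩
  have hu : IsUnit B.det := isUnit_iff_ne_zero.2 hB
  have hB1 : B *ᵥ (fun _ => (1 : ℂ)) = (-s) • (fun _ => (1 : ℂ)) := by
    rw [hBdef, Matrix.sub_mulVec, hL, Matrix.smul_mulVec, Matrix.one_mulVec]
    ext i
    simp
  have hBinv : B⁻¹ *ᵥ (fun _ => (1 : ℂ)) = (-s)⁻¹ • (fun _ => (1 : ℂ)) := by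
    have h1 : B *ᵥ ((-s)⁻¹ • fun _ => (1 : ℂ)) = fun _ => (1 : ℂ) := by
      rw [Matrix.mulVec_smul, hB1, smul_smul, inv_mul_cancel₀ (neg_ne_zero.2 hs), one_smul]
    have := congrArg (fun v => B⁻¹ *ᵥ v) h1
    simpa [Matrix.mulVec_mulVec, Matrix.nonsing_inv_mul B hu] using this.symm
  have hsum : (∑ j, L ⟨0, hN⟩ j) = 0 := by
    have := congrFun hL ⟨0, hN⟩
    simpa [Matrix.mulVec, dotProduct] using this
  have hsplit : B - Matrix.of (fun _ j => L ⟨0, hN⟩ j) =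
      B + Matrix.replicateCol (Fin 1) (fun _ => (-1 : ℂ)) * Matrix.replicateRow (Fin 1) ℓ := by
    ext i j
    simp [Matrix.mul_apply, Fin.sum_univ_one, ℓ, sub_eq_add_neg]
  rw [hsplit, Matrix.det_add_mul _ _ hu]
  have hcol : B⁻¹ * Matrix.replicateCol (Fin 1) (fun _ => (-1 : ℂ) : Fin N → ℂ) =
      Matrix.replicateCol (Fin 1) (s⁻¹ • fun _ => (1 : ℂ)) := by
    rw [← Matrix.replicateCol_mulVec]
    have : (fun _ => (-1 : ℂ)) = -(fun _ => (1 : ℂ) : Fin N → ℂ) := by ext; simp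
    rw [this, Matrix.mulVec_neg, hBinv]
    ext i
    simp
  rw [Matrix.mul_assoc, hcol, Matrix.replicateRow_mul_replicateCol]
  have hdot : ℓ ⬝ᵥ (s⁻¹ • fun _ => (1 : ℂ)) = 0 := by
    simp [dotProduct, ℓ, ← Finset.sum_mul, hsum]
  rw [hdot]
  simp [Matrix.det_unique]


/-- If `L·𝟙 = 0`, `0` is a simple root of the characteristic polynomial of `L`, and
`K > 0` satisfies `|λ|² < 2K·Re λ` for every nonzero eigenvalue `λ` of `L`, then
`A := I + (1/K)(𝟙ℓ₁ − L)` has `1` as a simple root of its characteristic polynomial and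
all its other eigenvalues in the open unit disc. -/
theorem stmt_4 (N : ℕ) (hN : 1 ≤ N) (L : Matrix (Fin N) (Fin N) ℂ)
    (hL : L *ᵥ (fun _ => (1 : ℂ)) = 0)
    (h0 : (Matrix.charpoly L).rootMultiplicity 0 = 1)
    (K : ℝ) (hK : 0 < K)
    (hgain : ∀ z ∈ spectrum ℂ L, z ≠ 0 → ‖z‖ ^ 2 < 2 * K * z.re)
    (A : Matrix (Fin N) (Fin N) ℂ)
    (hA : A = (1 : Matrix (Fin N) (Fin N) ℂ) +
        (1 / (K : ℂ)) • (Matrix.of (fun _ j => L ⟨0, hN⟩ j) - L)) :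
    (Matrix.charpoly A).rootMultiplicity 1 = 1 ∧
      ∀ μ ∈ spectrum ℂ A, μ ≠ 1 → ‖μ‖ < 1 := by
  have hK0 : (K : ℂ) ≠ 0 := by
    exact_mod_cast hK.ne'
  set c : ℂ := (-(1 / (K : ℂ))) ^ N with hc
  have hc0 : c ≠ 0 := by
    apply pow_ne_zero
    simp [hK0]
  -- relation between eval of charpoly L and det
  have h2 : ∀ s : ℂ, L.charpoly.eval s = (-1 : ℂ) ^ N * (L - s • 1).det := by
    intro s
    rw [eval_charpoly_det]
    have hm : Matrix.scalar (Fin N) s - L = -(L - s • 1) := by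
      ext i j
      by_cases h : i = j <;>
        simp [h, Matrix.scalar_apply, Matrix.diagonal, Matrix.one_apply] <;> ring
    rw [hm, Matrix.det_neg, Fintype.card_fin]
  -- pointwise determinant identity
  have hdet : ∀ μ : ℂ, (L - ((K : ℂ) * (1 - μ)) • 1).det ≠ 0 →
      A.charpoly.eval μ = c * L.charpoly.eval ((K : ℂ) * (1 - μ)) := by
    intro μ hBdet
    set s : ℂ := (K : ℂ) * (1 - μ) with hs
    have hmat : Matrix.scalar (Fin N) μ - A =
        (1 / (K : ℂ)) • ((L - s • 1) - Matrix.of (fun _ j => L ⟨0, hN⟩ j)) := by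
      rw [hA]
      ext i j
      by_cases h : i = j <;>
        simp [h, Matrix.scalar_apply, Matrix.diagonal, Matrix.one_apply, hs] <;>
        field_simp <;> ring
    rw [eval_charpoly_det, hmat, Matrix.det_smul, Fintype.card_fin,
      det_sub_rankone hN L hL s hBdet, h2 s, hc, ← mul_assoc, ← mul_pow]
    norm_num
  -- polynomial identity
  set q : ℂ[X] := Polynomial.C (K : ℂ) * (1 - X) with hq
  have hqeval : ∀ μ : ℂ, q.eval μ = (K : ℂ) * (1 - μ) := by
    intro μ; simp [hq]
  set p0 : ℂ[X] := L.charpoly.comp q with hp0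
  have hp0ne : p0 ≠ 0 := by
    rw [hp0]
    intro h
    rcases Polynomial.comp_eq_zero_iff.mp h with h' | ⟨_, h'⟩
    · exact L.charpoly_monic.ne_zero h'
    · have h1 : q.coeff 1 = -(K : ℂ) := by
        simp [hq, Polynomial.coeff_sub, Polynomial.coeff_one]
      rw [h'] at h1
      rw [Polynomial.coeff_C] at h1
      simp at h1
      exact hK.ne' h1
  have hS : {μ : ℂ | (L - ((K : ℂ) * (1 - μ)) • 1).det ≠ 0}ᶜ ⊆ {μ : ℂ | p0.IsRoot μ} := by
    intro μ hμ
    simp only [Set.mem_compl_iff, Set.mem_setOf_eq, not_not] at hμ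
    simp only [Set.mem_setOf_eq, IsRoot, hp0, Polynomial.eval_comp, hqeval, h2, hμ, mul_zero]
  have hSinf : ({μ : ℂ | (L - ((K : ℂ) * (1 - μ)) • 1).det ≠ 0}).Infinite := by
    have hfin : ({μ : ℂ | (L - ((K : ℂ) * (1 - μ)) • 1).det ≠ 0}ᶜ).Finite :=
      (Polynomial.finite_setOf_isRoot hp0ne).subset hS
    simpa using hfin.infinite_compl
  have hpoly : A.charpoly = Polynomial.C c * p0 := by
    apply Polynomial.eq_of_infinite_eval_eq
    apply hSinf.mono
    intro μ hμ
    simp only [Set.mem_setOf_eq] at hμ ⊢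
    rw [hdet μ hμ]
    simp [hp0, Polynomial.eval_comp, hqeval]
  -- factor out the simple root
  have hcharne : A.charpoly ≠ 0 := A.charpoly_monic.ne_zero
  set g : ℂ[X] := L.charpoly /ₘ (X - Polynomial.C 0) ^ (L.charpoly.rootMultiplicity 0) with hg
  have hgev : g.eval 0 ≠ 0 :=
    Polynomial.eval_divByMonic_pow_rootMultiplicity_ne_zero 0 L.charpoly_monic.ne_zero
  have hfact : L.charpoly = X * g := by
    have := Polynomial.pow_mul_divByMonic_rootMultiplicity_eq L.charpoly 0
    rw [h0, pow_one] at this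
    rw [← this]
    simp [hg, h0]
  have hAfact : A.charpoly =
      (Polynomial.C c * Polynomial.C (-(K : ℂ)) * g.comp q) * (X - Polynomial.C 1) := by
    rw [hpoly, hp0, hfact, Polynomial.mul_comp, Polynomial.X_comp]
    have hq' : q = Polynomial.C (-(K : ℂ)) * (X - Polynomial.C 1) := by
      rw [hq]; simp only [map_neg, Polynomial.C_1]; ring
    rw [hq']
    ring
  constructor
  · rw [hAfact, Polynomial.rootMultiplicity_mul (hAfact ▸ hcharne),
      Polynomial.rootMultiplicity_X_sub_C_self]
    have : (Polynomial.C c * Polynomial.C (-(K : ℂ)) * g.comp q).rootMultiplicity 1 = 0 := by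
      apply Polynomial.rootMultiplicity_eq_zero
      simp only [IsRoot, Polynomial.eval_mul, Polynomial.eval_C, Polynomial.eval_comp, hqeval]
      simp only [sub_self, mul_zero]
      exact fun h => by
        rcases mul_eq_zero.mp h with h | h
        · rcases mul_eq_zero.mp h with h | h
          · exact hc0 h
          · exact hK0 (neg_eq_zero.mp h)
        · exact hgev h
    omega
  · intro μ hμ hμ1
    have hev : A.charpoly.eval μ = 0 := (mem_spectrum_iff_charpoly A μ).mp hμ
    rw [hpoly] at hev
    simp only [Polynomial.eval_mul, Polynomial.eval_C, hp0, Polynomial.eval_comp, hqeval] at hev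
    have hev' : L.charpoly.eval ((K : ℂ) * (1 - μ)) = 0 := by
      rcases mul_eq_zero.mp hev with h | h
      · exact absurd h hc0
      · exact h
    set s : ℂ := (K : ℂ) * (1 - μ) with hsdef
    have hsspec : s ∈ spectrum ℂ L := (mem_spectrum_iff_charpoly L s).mpr hev'
    have hsne : s ≠ 0 := by
      rw [hsdef]
      exact mul_ne_zero hK0 (sub_ne_zero.mpr (Ne.symm hμ1))
    have hg' := hgain s hsspec hsne
    -- translate to real coordinates
    have hsre : s.re = K * (1 - μ.re) := by
      rw [hsdef]; simp [Complex.mul_re]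
    have hsabs : ‖s‖ ^ 2 = K ^ 2 * ((1 - μ.re) ^ 2 + μ.im ^ 2) := by
      rw [Complex.sq_norm, Complex.normSq_apply, hsdef]
      simp [Complex.mul_re, Complex.mul_im]
      ring
    have hμabs : ‖μ‖ ^ 2 = μ.re ^ 2 + μ.im ^ 2 := by
      rw [Complex.sq_norm, Complex.normSq_apply]; ring
    have hlt : ‖μ‖ ^ 2 < 1 := by
      rw [hμabs]
      rw [hsabs, hsre] at hg'
      nlinarith [hK, sq_nonneg K]
    have h1 : ‖μ‖ ^ 2 < 1 ^ 2 := by simpa using hlt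
    exact lt_of_pow_lt_pow_left₀ 2 zero_le_one h1
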